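/- arXiv:1410.7736 — 3 statements merged into one kernel-verified Lean document; each statement's English description precedes it below -/
import Mathlib

section
/- Let s₁, …, s_n be real numbers that are linearly independent over ℚ. Then the pushforward of the normalized Haar measure μ₀ on R̄ under the evaluation map R̄ → 𝕋ⁿ, x̄ ↦ (x̄(s₁), …, x̄(s_n)), equals the normalized Haar measure on the n-torus 𝕋ⁿ. In particular, for any measurable U ⊆ 𝕋 with Haar measure μ_H(U), the set Z = {x̄ ∈ R̄ | x̄(sᵢ) ∈ U for all i = 1,…,n} satisfies μ₀(Z) = (μ_H(U))ⁿ. -/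
open MeasureTheory

noncomputable instance : MeasurableSpace Circle := borel Circle
instance : BorelSpace Circle := ⟨rfl⟩

/-- The Bohr compactification of `ℝ`: the subgroup of the compact product group
`ℝ → Circle` consisting of all (not necessarily continuous) group homomorphisms
from the additive group `ℝ` to the circle group. -/
noncomputable def bohrRSubgroup : Subgroup (ℝ → Circle) where
  carrier := {f | ∀ a b : ℝ, f (a + b) = f a * f b}
  mul_mem' {f g} hf hg := by
    intro a b
    simp only [Pi.mul_apply, hf a b, hg a b]
    exact mul_mul_mul_comm _ _ _ _
  one_mem' := by intro a b; simp
  inv_mem' {f} hf := by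
    intro a b
    simp only [Pi.inv_apply, hf a b, mul_inv_rev]
    exact mul_comm _ _

/-- The Bohr compactification of `ℝ`, as a topological group. -/
abbrev RBar : Type := bohrRSubgroup

lemma isClosed_bohrR : IsClosed (bohrRSubgroup : Set (ℝ → Circle)) := by
  have h : (bohrRSubgroup : Set (ℝ → Circle))
      = ⋂ (a : ℝ) (b : ℝ), {f : ℝ → Circle | f (a + b) = f a * f b} := by
    ext f; simp only [Set.mem_iInter, Set.mem_setOf_eq, SetLike.mem_coe]
    exact ⟨fun h a b => h a b, fun h a b => h a b⟩
  rw [h]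
  exact isClosed_iInter fun a => isClosed_iInter fun b =>
    isClosed_eq (continuous_apply _) ((continuous_apply a).mul (continuous_apply b))

instance : CompactSpace RBar :=
  isCompact_iff_compactSpace.mp isClosed_bohrR.isCompact

noncomputable instance : MeasurableSpace RBar := borel RBar
instance : BorelSpace RBar := ⟨rfl⟩


lemma eval_surjective {n : ℕ} {s : Fin n → ℝ} (hs : LinearIndependent ℚ s) :
    Function.Surjective (fun x : RBar => fun i : Fin n => (x : ℝ → Circle) (s i)) := by
  intro t
  set θ : Fin n → ℝ := fun i => Complex.arg (t i) with hθ
  set V : Submodule ℚ ℝ := Submodule.span ℚ (Set.range s) with hV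
  let b : Module.Basis (Fin n) ℚ V := Module.Basis.span hs
  obtain ⟨W, hW⟩ := V.exists_isCompl
  let g : V →ₗ[ℚ] ℝ := b.constr ℚ θ
  let ℓ : ℝ →ₗ[ℚ] ℝ := g ∘ₗ (V.projectionOnto W hW)
  have hmem : ∀ i, s i ∈ V := fun i => Submodule.subset_span ⟨i, rfl⟩
  have hℓ : ∀ i, ℓ (s i) = θ i := by
    intro i
    have h1 : V.projectionOnto W hW (s i) = ⟨s i, hmem i⟩ :=
      Submodule.projectionOnto_apply_left hW ⟨s i, hmem i⟩
    have h2 : b i = (⟨s i, hmem i⟩ : V) := Module.Basis.span_apply hs i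
    have h3 : g (b i) = θ i := b.constr_basis ℚ θ i
    simp only [ℓ, LinearMap.comp_apply, h1, ← h2, h3]
  refine ⟨⟨fun r => Circle.exp (ℓ r), ?_⟩, ?_⟩
  · intro a b'
    simp only [map_add, Circle.exp_add]
  · funext i
    simp only [hℓ i, hθ, Circle.exp_arg]

/-- Pushforward of the normalized Haar measure on the Bohr compactification of `ℝ`
under evaluation at rationally independent reals `s₁, …, sₙ` is the normalized Haar
measure on the `n`-torus; in particular the measure of
`{x̄ | x̄(sᵢ) ∈ U for all i}` is `μ_H(U)ⁿ`. -/
theorem map_haar_eval_eq_pi_haar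
    (μ₀ : Measure RBar) [μ₀.IsHaarMeasure] [IsProbabilityMeasure μ₀]
    (μH : Measure Circle) [μH.IsHaarMeasure] [IsProbabilityMeasure μH]
    (n : ℕ) (s : Fin n → ℝ) (hs : LinearIndependent ℚ s) :
    μ₀.map (fun x : RBar => fun i : Fin n => (x : ℝ → Circle) (s i))
      = Measure.pi (fun _ : Fin n => μH) ∧
    ∀ U : Set Circle, MeasurableSet U →
      μ₀ {x : RBar | ∀ i : Fin n, (x : ℝ → Circle) (s i) ∈ U} = (μH U) ^ n := by
  classical
  let F : bohrRSubgroup →* (Fin n → Circle) :=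
    { toFun := fun x => fun i => (x : ℝ → Circle) (s i)
      map_one' := rfl
      map_mul' := fun x y => rfl }
  have hcont : Continuous F := continuous_pi fun i =>
    (continuous_apply (s i)).comp continuous_subtype_val
  have hsurj : Function.Surjective F := eval_surjective hs
  have hmp : MeasurePreserving F μ₀ (Measure.pi fun _ => μH) :=
    MonoidHom.measurePreserving hcont hsurj (by simp)
  refine ⟨hmp.map_eq, ?_⟩
  intro U hU
  have hset : {x : RBar | ∀ i : Fin n, (x : ℝ → Circle) (s i) ∈ U}
      = F ⁻¹' (Set.univ.pi fun _ => U) := by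
    ext x; simp [F, Set.mem_pi]
  rw [hset, ← Measure.map_apply hcont.measurable (MeasurableSet.univ_pi fun _ => hU),
    hmp.map_eq, Measure.pi_pi]
  simp
end

section
/- The Haar measure μ₀ on R̄ is supported on the set W of all elements x̄ ∈ R̄ which, as maps from ℝ to 𝕋, are discontinuous at every point of ℝ. Equivalently, the complement W^c = {x̄ ∈ R̄ | there exists s₀ ∈ ℝ at which x̄ : ℝ → 𝕋 is continuous} is contained in a subset of R̄ of μ₀-measure zero (i.e. W^c is μ₀-null). -/
open MeasureTheory

lemma circle_hom_zero (x : ℝ → Circle) (hx : ∀ a b : ℝ, x (a + b) = x a * x b) : x 0 = 1 := by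
  have h := hx 0 0
  rw [add_zero] at h
  exact (left_eq_mul.mp h)

lemma circle_hom_neg (x : ℝ → Circle) (hx : ∀ a b : ℝ, x (a + b) = x a * x b) (s : ℝ) :
    x (-s) = (x s)⁻¹ := by
  have h := hx s (-s)
  rw [add_neg_cancel, circle_hom_zero x hx] at h
  exact eq_inv_of_mul_eq_one_right h.symm

lemma circle_hom_pow (x : ℝ → Circle) (hx : ∀ a b : ℝ, x (a + b) = x a * x b)
    (n : ℕ) (s : ℝ) : x ((n : ℝ) * s) = x s ^ n := by
  induction n with
  | zero => simp [circle_hom_zero x hx]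
  | succ n ih =>
    have h1 : ((n + 1 : ℕ) : ℝ) * s = (n : ℝ) * s + s := by push_cast; ring
    rw [h1, hx, ih, pow_succ]

lemma circle_exp_nat_mul (m : ℕ) (u : ℝ) : Circle.exp ((m : ℝ) * u) = Circle.exp u ^ m :=
  circle_hom_pow (fun t => Circle.exp t) (fun a b => Circle.exp_add a b) m u

lemma circle_hom_continuous_of_continuousAt (x : ℝ → Circle)
    (hx : ∀ a b : ℝ, x (a + b) = x a * x b) {s₀ : ℝ} (h : ContinuousAt x s₀) :
    Continuous x := by
  rw [continuous_iff_continuousAt]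
  intro s₁
  have key : (fun t : ℝ => x (s₁ - s₀) * x (t - s₁ + s₀)) = x := by
    funext t; rw [← hx]; congr 1; ring
  rw [← key]
  apply ContinuousAt.mul continuousAt_const
  have hg : ContinuousAt (fun t : ℝ => t - s₁ + s₀) s₁ := by fun_prop
  have hx0 : ContinuousAt x (s₁ - s₁ + s₀) := by
    rw [show s₁ - s₁ + s₀ = s₀ by ring]; exact h
  exact ContinuousAt.comp hx0 hg

lemma circle_hom_exists_exp (x : ℝ → Circle)
    (hx : ∀ a b : ℝ, x (a + b) = x a * x b) (hcont : Continuous x) :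
    ∃ c : ℝ, ∀ t : ℝ, x t = Circle.exp (c * t) := by
  have hx0 := circle_hom_zero x hx
  have hcoe : Continuous (fun t : ℝ => ((x t : ℂ)).re) :=
    Complex.continuous_re.comp (continuous_subtype_val.comp hcont)
  have hU : IsOpen {t : ℝ | 0 < ((x t : ℂ)).re} := isOpen_lt continuous_const hcoe
  have h0U : (0 : ℝ) ∈ {t : ℝ | 0 < ((x t : ℂ)).re} := by
    simp [hx0]
  obtain ⟨ε, hε, hball⟩ := Metric.isOpen_iff.mp hU 0 h0U
  set δ : ℝ := ε / 2 with hδdef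
  have hδpos : 0 < δ := by positivity
  have hre : ∀ t : ℝ, |t| ≤ δ → 0 < ((x t : ℂ)).re := by
    intro t ht
    apply hball
    rw [Metric.mem_ball, Real.dist_eq, sub_zero]
    calc |t| ≤ δ := ht
      _ < ε := by simp only [hδdef]; linarith
  set a : ℝ → ℝ := fun t => Complex.arg ((x t : ℂ)) with ha
  have hasmall : ∀ t, |t| ≤ δ → |a t| < Real.pi / 2 := fun t ht =>
    Complex.abs_arg_lt_pi_div_two_iff.mpr (Or.inl (hre t ht))
  have hexp_a : ∀ t, Circle.exp (a t) = x t := fun t => Circle.exp_arg (x t)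
  have hadd : ∀ s t : ℝ, |s| ≤ δ → |t| ≤ δ → |s + t| ≤ δ → a (s + t) = a s + a t := by
    intro s t hs ht hst
    have h1 : x (s + t) = Circle.exp (a s + a t) := by
      rw [Circle.exp_add, hexp_a, hexp_a, hx]
    have h2 : |a s + a t| < Real.pi := by
      have h3 := hasmall s hs
      have h4 := hasmall t ht
      calc |a s + a t| ≤ |a s| + |a t| := abs_add_le _ _
        _ < Real.pi / 2 + Real.pi / 2 := by linarith
        _ = Real.pi := by ring
    rw [abs_lt] at h2
    have h5 : a (s + t) = Complex.arg ((Circle.exp (a s + a t) : ℂ)) := by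
      rw [ha]; simp only [h1]
      rfl
    rw [h5]
    exact Circle.arg_exp h2.1 h2.2.le
  have hmulnat : ∀ (m : ℕ) (u : ℝ), 0 ≤ u → (m : ℝ) * u ≤ δ → a ((m : ℝ) * u) = m * a u := by
    intro m
    induction m with
    | zero => intro u _ _; simp [ha, hx0, Complex.arg_one]
    | succ m ih =>
      intro u hu hle
      have hm0 : (0:ℝ) ≤ (m : ℝ) := Nat.cast_nonneg m
      have hcast : ((m + 1 : ℕ) : ℝ) = (m : ℝ) + 1 := by push_cast; ring
      rw [hcast] at hle ⊢
      have hmu : (m : ℝ) * u ≤ δ := by nlinarith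
      have huδ : u ≤ δ := by nlinarith
      have h1 : ((m : ℝ) + 1) * u = (m : ℝ) * u + u := by ring
      rw [h1, hadd _ _ (abs_le.mpr ⟨by nlinarith, hmu⟩) (abs_le.mpr ⟨by linarith, huδ⟩)
        (abs_le.mpr ⟨by nlinarith, by nlinarith⟩), ih u hu hmu]
      ring
  refine ⟨a δ / δ, ?_⟩
  set c : ℝ := a δ / δ with hc
  have hqpos : ∀ q : ℚ, 0 ≤ q → x ((q : ℝ) * δ) = Circle.exp (c * ((q : ℝ) * δ)) := by
    intro q hq
    set n : ℕ := q.den with hn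
    set m : ℕ := q.num.toNat with hm
    have hnpos : 0 < (n : ℝ) := by
      have := q.pos
      exact_mod_cast this
    have hqcast : (q : ℝ) = (m : ℝ) / (n : ℝ) := by
      rw [Rat.cast_def]
      congr 1
      rw [hm]
      exact_mod_cast (Int.toNat_of_nonneg (Rat.num_nonneg.mpr hq)).symm
    have hδn : (n : ℝ) * (δ / n) = δ := by field_simp
    have han : a (δ / n) = a δ / n := by
      have h6 := hmulnat n (δ / n) (by positivity) (le_of_eq hδn)
      rw [hδn] at h6
      rw [eq_div_iff hnpos.ne', mul_comm, ← h6]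
    have harg : (q : ℝ) * δ = (m : ℝ) * (δ / n) := by rw [hqcast]; ring
    rw [harg, circle_hom_pow x hx m (δ / n), ← hexp_a (δ / n), ← circle_exp_nat_mul]
    congr 1
    rw [han, hc]
    field_simp
  have hq : ∀ q : ℚ, x ((q : ℝ) * δ) = Circle.exp (c * ((q : ℝ) * δ)) := by
    intro q
    rcases le_or_gt 0 q with h | h
    · exact hqpos q h
    · have h1 := hqpos (-q) (by linarith)
      have hcast : ((-q : ℚ) : ℝ) = -(q : ℝ) := by push_cast; ring
      rw [hcast, neg_mul] at h1
      have h2 := circle_hom_neg x hx ((q : ℝ) * δ)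
      calc x ((q : ℝ) * δ) = (x (-((q : ℝ) * δ)))⁻¹ := by rw [h2, inv_inv]
        _ = (Circle.exp (c * -((q : ℝ) * δ)))⁻¹ := by rw [h1]
        _ = Circle.exp (c * ((q : ℝ) * δ)) := by
            rw [← Circle.exp_neg]; congr 1; ring
  have hdense : Dense (Set.range (fun q : ℚ => (q : ℝ) * δ)) := by
    have h1 : DenseRange ((↑) : ℚ → ℝ) := Rat.denseRange_cast
    have h2 : Function.Surjective (fun r : ℝ => r * δ) := fun y =>
      ⟨y / δ, by field_simp⟩
    have h3 : DenseRange (fun r : ℝ => r * δ) := h2.denseRange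
    exact h3.comp h1 (continuous_id.mul continuous_const)
  have hfin : x = (fun t : ℝ => Circle.exp (c * t)) := by
    apply Continuous.ext_on hdense hcont
      (Circle.exp.continuous.comp (continuous_const.mul continuous_id))
    rintro _ ⟨q, rfl⟩
    exact hq q
  exact fun t => congrFun hfin t

lemma exists_bad_qlinear : ∃ g : ℝ →ₗ[ℚ] ℝ, g 1 = 0 ∧ g (Real.sqrt 2) = 1 := by
  set p : Submodule ℚ ℝ := Submodule.span ℚ {(1 : ℝ)} with hp
  have hs2 : Real.sqrt 2 ∉ p := by
    intro hmem
    rw [hp, Submodule.mem_span_singleton] at hmem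
    obtain ⟨q, hqe⟩ := hmem
    exact irrational_sqrt_two ⟨q, by rw [← hqe]; simp [Rat.smul_def]⟩
  set F := LinearPMap.supSpanSingleton (⟨p, 0⟩ : ℝ →ₗ.[ℚ] ℝ) (Real.sqrt 2) 1 hs2 with hF
  obtain ⟨g, hgext⟩ := F.toFun.exists_extend
  have h1mem : (1 : ℝ) ∈ p := Submodule.mem_span_singleton_self 1
  have h0mem : (0 : ℝ) ∈ p := p.zero_mem
  refine ⟨g, ?_, ?_⟩
  · have hv := LinearPMap.supSpanSingleton_apply_mk (⟨p, 0⟩ : ℝ →ₗ.[ℚ] ℝ)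
      (Real.sqrt 2) 1 hs2 1 h1mem 0
    have := (LinearMap.congr_fun hgext _).trans hv
    simp at this; exact this
  · have hv := LinearPMap.supSpanSingleton_apply_mk (⟨p, 0⟩ : ℝ →ₗ.[ℚ] ℝ)
      (Real.sqrt 2) 1 hs2 0 h0mem 1
    have := (LinearMap.congr_fun hgext _).trans hv
    simp at this; exact this

lemma bohr_mem_iff (f : ℝ → Circle) :
    f ∈ bohrRSubgroup ↔ ∀ a b : ℝ, f (a + b) = f a * f b := Iff.rfl

/-- The normalized Haar measure on the Bohr compactification of `ℝ` is supported on
the set of everywhere-discontinuous homomorphisms: the set of `x̄ ∈ R̄` that are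
continuous at some point `s₀ ∈ ℝ` is `μ₀`-null. -/
theorem haar_supported_on_everywhere_discontinuous
    (μ₀ : Measure RBar) [μ₀.IsHaarMeasure] [IsProbabilityMeasure μ₀] :
    μ₀ {x : RBar | ∃ s₀ : ℝ, ContinuousAt (fun k : ℝ => (x : ℝ → Circle) k) s₀} = 0 := by
  classical
  have hφmem : ∀ c : ℝ, (fun t : ℝ => Circle.exp (c * t)) ∈ bohrRSubgroup := by
    intro c
    rw [bohr_mem_iff]
    intro a b
    rw [mul_add, Circle.exp_add]
  set φ : ℝ → RBar := fun c => ⟨fun t => Circle.exp (c * t), hφmem c⟩ with hφ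
  have hφcont : Continuous φ := by
    apply Continuous.subtype_mk
    exact continuous_pi fun t => Circle.exp.continuous.comp (continuous_id.mul continuous_const)
  have hφadd : ∀ c d : ℝ, φ (c + d) = φ c * φ d := by
    intro c d
    apply Subtype.ext; funext t
    show Circle.exp ((c + d) * t) = Circle.exp (c * t) * Circle.exp (d * t)
    rw [add_mul, Circle.exp_add]
  have hS : {x : RBar | ∃ s₀ : ℝ, ContinuousAt (fun k : ℝ => (x : ℝ → Circle) k) s₀}
      = Set.range φ := by
    ext x
    constructor
    · rintro ⟨s₀, hcA⟩
      have hhom : ∀ a b : ℝ, (x : ℝ → Circle) (a + b)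
          = (x : ℝ → Circle) a * (x : ℝ → Circle) b := (bohr_mem_iff _).mp x.2
      have hcont : Continuous (x : ℝ → Circle) :=
        circle_hom_continuous_of_continuousAt _ hhom hcA
      obtain ⟨c, hc⟩ := circle_hom_exists_exp _ hhom hcont
      exact ⟨c, Subtype.ext (funext fun t => (hc t).symm)⟩
    · rintro ⟨c, rfl⟩
      refine ⟨0, ?_⟩
      exact (Circle.exp.continuous.comp (continuous_const.mul continuous_id)).continuousAt
  rw [hS]
  by_contra hne
  have hpos : 0 < μ₀ (Set.range φ) := zero_lt_iff.mpr hne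
  have hmeas : MeasurableSet (Set.range φ) := by
    have hcov : Set.range φ = ⋃ n : ℕ, φ '' (Set.Icc (-(n : ℝ)) n) := by
      ext x
      simp only [Set.mem_iUnion, Set.mem_image, Set.mem_range]
      constructor
      · rintro ⟨c, rfl⟩
        obtain ⟨n, hn⟩ := exists_nat_ge |c|
        exact ⟨n, c, ⟨neg_le_of_abs_le hn, le_of_abs_le hn⟩, rfl⟩
      · rintro ⟨n, c, _, rfl⟩
        exact ⟨c, rfl⟩
    rw [hcov]
    exact MeasurableSet.iUnion fun n =>
      ((isCompact_Icc.image hφcont).isClosed.measurableSet)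
  set H : Subgroup RBar :=
    { carrier := Set.range φ
      mul_mem' := by rintro _ _ ⟨c, rfl⟩ ⟨d, rfl⟩; exact ⟨c + d, hφadd c d⟩
      one_mem' := ⟨0, by
        apply Subtype.ext; funext t
        show Circle.exp (0 * t) = 1
        rw [zero_mul, Circle.exp_zero]⟩
      inv_mem' := by
        rintro _ ⟨c, rfl⟩
        refine ⟨-c, ?_⟩
        apply Subtype.ext; funext t
        show Circle.exp (-c * t) = (Circle.exp (c * t))⁻¹
        rw [neg_mul, Circle.exp_neg] } with hH
  have hnhds : (H : Set RBar) ∈ nhds (1 : RBar) := by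
    have hdiv := MeasureTheory.Measure.div_mem_nhds_one_of_haar_pos μ₀ (Set.range φ) hmeas hpos
    refine Filter.mem_of_superset hdiv ?_
    rintro z hz
    rw [Set.mem_div] at hz
    obtain ⟨u, hu, v, hv, rfl⟩ := hz
    exact H.div_mem hu hv
  have hopen : IsOpen (H : Set RBar) := Subgroup.isOpen_of_mem_nhds H hnhds
  haveI hfin : Finite (RBar ⧸ H) := Subgroup.quotient_finite_of_isOpen H hopen
  have hidx : H.index ≠ 0 := Subgroup.index_ne_zero_of_finite
  have hall : ∀ x : RBar, x ∈ H := by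
    intro x
    have hxhom : ∀ a b : ℝ, (x : ℝ → Circle) (a + b)
        = (x : ℝ → Circle) a * (x : ℝ → Circle) b := (bohr_mem_iff _).mp x.2
    set n : ℕ := H.index with hn
    have hy : (fun t : ℝ => (x : ℝ → Circle) (t / n)) ∈ bohrRSubgroup := by
      rw [bohr_mem_iff]
      intro a b
      rw [add_div]
      exact hxhom _ _
    set y : RBar := ⟨_, hy⟩ with hydef
    have hyx : y ^ n = x := by
      apply Subtype.ext
      rw [SubmonoidClass.coe_pow]
      funext t
      show ((x : ℝ → Circle) (t / n)) ^ n = (x : ℝ → Circle) t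
      rw [← circle_hom_pow _ hxhom n (t / n)]
      have hn0 : (n : ℝ) ≠ 0 := Nat.cast_ne_zero.mpr hidx
      field_simp
    rw [← hyx]
    exact H.pow_index_mem y
  obtain ⟨g, hg1, hg2⟩ := exists_bad_qlinear
  have hξmem : (fun t : ℝ => Circle.exp (g t)) ∈ bohrRSubgroup := by
    rw [bohr_mem_iff]
    intro a b
    rw [map_add, Circle.exp_add]
  obtain ⟨c, hc⟩ := hall ⟨_, hξmem⟩
  have hpt : ∀ t : ℝ, Circle.exp (c * t) = Circle.exp (g t) := by
    intro t
    exact congrFun (congrArg Subtype.val hc) t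
  have hlin : ∀ t : ℝ, g t = c * t := by
    intro t
    by_contra hne2
    set d : ℝ := g t - c * t with hd
    have hdne : d ≠ 0 := sub_ne_zero.mpr hne2
    obtain ⟨n, hngt⟩ := exists_nat_gt (|d| / (2 * Real.pi))
    have hπ : 0 < Real.pi := Real.pi_pos
    have hnpos : 0 < (n : ℝ) := lt_of_le_of_lt (by positivity) hngt
    have hn0 : (n : ℝ) ≠ 0 := hnpos.ne'
    have hq := hpt (t / n)
    rw [Circle.exp_eq_exp] at hq
    obtain ⟨m, hm⟩ := hq
    have hgn : g (t / n) = g t / n := by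
      have h1 : ((n : ℚ)⁻¹ : ℚ) • t = t / n := by
        rw [Rat.smul_def]
        push_cast
        rw [inv_mul_eq_div]
      rw [← h1, LinearMap.map_smul, Rat.smul_def]
      push_cast
      rw [inv_mul_eq_div]
    rw [hgn] at hm
    -- hm : c * (t / n) = g t / n + m * (2 * π)
    have hdm : d / n = -(m : ℝ) * (2 * Real.pi) := by
      rw [hd]
      field_simp at hm ⊢
      linarith
    rcases eq_or_ne m 0 with rfl | hm0
    · rw [Int.cast_zero] at hdm
      have : d = 0 := by
        field_simp at hdm
        simpa using hdm
      exact hdne this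
    · have h2 : (1 : ℝ) ≤ |(m : ℝ)| := by
        rw [← Int.cast_abs]
        exact_mod_cast Int.one_le_abs (by exact_mod_cast hm0)
      have h3 : |d| / n = |(m : ℝ)| * (2 * Real.pi) := by
        rw [← abs_of_pos (show (0:ℝ) < 2 * Real.pi by positivity), ← abs_neg ((m:ℝ)),
          ← abs_mul, ← hdm, abs_div, abs_of_pos hnpos]
      have h4 : |d| / n ≥ 2 * Real.pi := by
        rw [h3]; nlinarith
      have h5 : |d| < n * (2 * Real.pi) := by
        rw [div_lt_iff₀ (by positivity)] at hngt
        linarith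
      have h6 : |d| / n < 2 * Real.pi := by
        rw [div_lt_iff₀ hnpos]
        linarith [h5]
      linarith
  have hc0 : c = 0 := by
    have := hlin 1
    rw [hg1] at this
    linarith [this]
  have := hlin (Real.sqrt 2)
  rw [hg2, hc0, zero_mul] at this
  exact one_ne_zero this
end

section
/- The Haar measure μ₀ on R̄ is ergodic with respect to the action of ℝ∖{0} given by (λ* x̄)(k) = x̄(λk): if ψ ∈ L²(R̄, μ₀) satisfies, for every λ ≠ 0, ψ(λ* x̄) = ψ(x̄) for μ₀-almost every x̄ ∈ R̄, then ψ is equal μ₀-almost everywhere to a constant function. -/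
open MeasureTheory

/-- For `λ ∈ ℝ`, the rescaling map `λ* : R̄ → R̄`, `(λ* x̄)(k) = x̄(λ k)`. -/
noncomputable def scaleBohr (l : ℝ) (x : RBar) : RBar :=
  ⟨fun k : ℝ => (x : ℝ → Circle) (l * k), by
    intro a b
    simp only [mul_add]
    exact x.2 (l * a) (l * b)⟩

/-! ### Auxiliary material for the proof -/

open scoped ComplexConjugate Pointwise
open Filter Topology

section BohrAux

lemma rbar_apply_add (x : RBar) (a b : ℝ) :
    (x : ℝ → Circle) (a + b) = (x : ℝ → Circle) a * (x : ℝ → Circle) b := x.2 a b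

lemma rbar_apply_zero (x : RBar) : (x : ℝ → Circle) 0 = 1 := by
  have h := x.2 0 0
  rw [add_zero] at h
  exact left_eq_mul.mp h

lemma rbar_apply_neg (x : RBar) (a : ℝ) :
    (x : ℝ → Circle) (-a) = ((x : ℝ → Circle) a)⁻¹ := by
  have h := x.2 a (-a)
  rw [add_neg_cancel, rbar_apply_zero] at h
  exact eq_inv_of_mul_eq_one_right h.symm

/-- The character of `RBar` given by evaluation at `k : ℝ`. -/
noncomputable def bchar (k : ℝ) : C(RBar, ℂ) :=
  ⟨fun x => ((x : ℝ → Circle) k : ℂ),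
    continuous_subtype_val.comp ((continuous_apply k).comp continuous_subtype_val)⟩

@[simp] lemma bchar_apply (k : ℝ) (x : RBar) :
    bchar k x = ((x : ℝ → Circle) k : ℂ) := rfl

lemma bchar_zero : bchar 0 = 1 := by
  ext x; simp [rbar_apply_zero]

lemma bchar_mul_apply (k j : ℝ) (x : RBar) :
    bchar k x * bchar j x = bchar (k + j) x := by
  simp [rbar_apply_add]

lemma bchar_mul (k j : ℝ) : bchar k * bchar j = bchar (k + j) := by
  ext x; exact bchar_mul_apply k j x

lemma conj_bchar (k : ℝ) (x : RBar) : conj (bchar k x) = bchar (-k) x := by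
  rw [bchar_apply, bchar_apply, rbar_apply_neg]
  exact (Circle.coe_inv_eq_conj _).symm

lemma star_bchar (k : ℝ) : star (bchar k) = bchar (-k) := by
  ext x
  show conj (bchar k x) = bchar (-k) x
  exact conj_bchar k x

/-- `scaleBohr l` commutes with the group structure. -/
lemma scaleBohr_mul (l : ℝ) (x y : RBar) :
    scaleBohr l (x * y) = scaleBohr l x * scaleBohr l y := rfl

lemma continuous_scaleBohr (l : ℝ) : Continuous (scaleBohr l) := by
  apply Continuous.subtype_mk
  exact continuous_pi fun k => (continuous_apply (l * k)).comp continuous_subtype_val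

/-- For `l ≠ 0`, rescaling is a multiplicative self-equivalence of `RBar`. -/
noncomputable def scaleMulEquiv (l : ℝ) (hl : l ≠ 0) : RBar ≃* RBar where
  toFun := scaleBohr l
  invFun := scaleBohr l⁻¹
  left_inv x := Subtype.ext (funext fun k => by
    show (x : ℝ → Circle) (l * (l⁻¹ * k)) = (x : ℝ → Circle) k
    rw [← mul_assoc, mul_inv_cancel₀ hl, one_mul])
  right_inv x := Subtype.ext (funext fun k => by
    show (x : ℝ → Circle) (l⁻¹ * (l * k)) = (x : ℝ → Circle) k
    rw [← mul_assoc, inv_mul_cancel₀ hl, one_mul])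
  map_mul' x y := rfl

/-- For `l ≠ 0`, rescaling as a homeomorphism of `RBar`. -/
noncomputable def scaleHomeo (l : ℝ) (hl : l ≠ 0) : RBar ≃ₜ RBar where
  toEquiv := (scaleMulEquiv l hl).toEquiv
  continuous_toFun := continuous_scaleBohr l
  continuous_invFun := continuous_scaleBohr l⁻¹

/-- For `l ≠ 0`, rescaling as a measurable equivalence of `RBar`. -/
noncomputable def scaleMeasEquiv (l : ℝ) (hl : l ≠ 0) : RBar ≃ᵐ RBar :=
  (scaleHomeo l hl).toMeasurableEquiv

variable (μ₀ : Measure RBar) [μ₀.IsHaarMeasure] [IsProbabilityMeasure μ₀]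

lemma scale_measurePreserving {l : ℝ} (hl : l ≠ 0) :
    MeasurePreserving (scaleMeasEquiv l hl) μ₀ μ₀ := by
  refine ⟨(scaleMeasEquiv l hl).measurable, ?_⟩
  have h1 : Measure.IsHaarMeasure (μ₀.map (scaleMulEquiv l hl)) :=
    (scaleMulEquiv l hl).isHaarMeasure_map μ₀ (continuous_scaleBohr l)
      (continuous_scaleBohr l⁻¹)
  have h2 : IsProbabilityMeasure (μ₀.map (scaleMulEquiv l hl)) :=
    Measure.isProbabilityMeasure_map ((continuous_scaleBohr l).measurable.aemeasurable)
  exact Measure.isHaarMeasure_eq_of_isProbabilityMeasure (μ₀.map (scaleMulEquiv l hl)) μ₀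

/-- Integral of a nontrivial character vanishes. -/
lemma integral_bchar_eq_zero {k : ℝ} (hk : k ≠ 0) : ∫ x, bchar k x ∂μ₀ = 0 := by
  classical
  -- the element `t ↦ exp (π t / k)` of `RBar` takes value `exp π = -1 ≠ 1` at `k`
  set x₀ : RBar := ⟨fun t => Circle.exp (Real.pi / k * t), by
    intro a b
    show Circle.exp (Real.pi / k * (a + b))
      = Circle.exp (Real.pi / k * a) * Circle.exp (Real.pi / k * b)
    rw [mul_add]; exact Circle.exp_add _ _⟩ with hx₀def
  have hx₀ : ((x₀ : ℝ → Circle) k : ℂ) ≠ 1 := by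
    have hval : (x₀ : ℝ → Circle) k = Circle.exp Real.pi := by
      show Circle.exp (Real.pi / k * k) = Circle.exp Real.pi
      rw [div_mul_cancel₀ _ hk]
    rw [hval]
    intro h
    have h1 : Circle.exp Real.pi = 1 := Subtype.ext h
    obtain ⟨n, hn⟩ := Circle.exp_eq_one.mp h1
    have h2 : (1 : ℝ) = n * 2 :=
      mul_right_cancel₀ Real.pi_ne_zero (by linear_combination hn)
    have h3 : (1 : ℤ) = n * 2 := by exact_mod_cast h2
    omega
  have h1 : ∫ x, bchar k (x₀ * x) ∂μ₀ = ∫ x, bchar k x ∂μ₀ :=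
    integral_mul_left_eq_self (fun x => bchar k x) x₀
  have h2 : ∀ x : RBar, bchar k (x₀ * x)
      = ((x₀ : ℝ → Circle) k : ℂ) * bchar k x := fun x => rfl
  simp_rw [h2] at h1
  rw [integral_const_mul] at h1
  have h3 : (((x₀ : ℝ → Circle) k : ℂ) - 1) * ∫ x, bchar k x ∂μ₀ = 0 := by
    rw [sub_mul, one_mul, h1, sub_self]
  rcases mul_eq_zero.mp h3 with h | h
  · exact absurd (sub_eq_zero.mp h) hx₀
  · exact h

lemma integral_bchar_zero : ∫ x, bchar 0 x ∂μ₀ = 1 := by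
  have h : ∀ x : RBar, bchar 0 x = 1 := fun x => by
    rw [bchar_zero]; rfl
  simp_rw [h]
  simp

lemma integral_bchar (k : ℝ) :
    ∫ x, bchar k x ∂μ₀ = if k = 0 then 1 else 0 := by
  split_ifs with h
  · subst h; exact integral_bchar_zero μ₀
  · exact integral_bchar_eq_zero μ₀ h

local notation "⟪" x ", " y "⟫" => @inner ℂ _ _ x y

/-- The characters as elements of `L²`. -/
noncomputable def bcharL (k : ℝ) : Lp ℂ 2 μ₀ :=
  ContinuousMap.toLp (E := ℂ) 2 μ₀ ℂ (bchar k)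

lemma bcharL_coeFn (k : ℝ) : (bcharL μ₀ k : RBar → ℂ) =ᵐ[μ₀] bchar k :=
  ContinuousMap.coeFn_toLp (E := ℂ) (p := 2) μ₀ (𝕜 := ℂ) (bchar k)

lemma inner_bcharL (k j : ℝ) :
    ⟪bcharL μ₀ k, bcharL μ₀ j⟫ = if k = j then (1 : ℂ) else 0 := by
  rw [bcharL, bcharL, ContinuousMap.inner_toLp]
  have h : ∀ x : RBar, conj (bchar k x) * bchar j x = bchar (j - k) x := by
    intro x
    rw [conj_bchar]
    rw [bchar_mul_apply]
    congr 1
    ring_nf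
  simp_rw [mul_comm (bchar j _), h]
  rw [integral_bchar]
  by_cases hkj : k = j
  · simp [hkj]
  · rw [if_neg (sub_ne_zero.mpr (Ne.symm hkj)), if_neg hkj]

lemma orthonormal_bcharL : Orthonormal ℂ (fun k : ℝ => bcharL μ₀ k) := by
  rw [orthonormal_iff_ite]
  intro k j
  rw [inner_bcharL]

/-- The star subalgebra generated by the characters: it equals their linear span. -/
noncomputable def bcharAlg : StarSubalgebra ℂ C(RBar, ℂ) where
  carrier := (Submodule.span ℂ (Set.range bchar) : Set C(RBar, ℂ))
  mul_mem' := by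
    intro a b ha hb
    have hmulset : Set.range bchar * Set.range bchar ⊆ Set.range bchar := by
      rintro _ ⟨_, ⟨k, rfl⟩, _, ⟨j, rfl⟩, rfl⟩
      exact ⟨k + j, (bchar_mul k j).symm⟩
    have h := Submodule.mul_mem_mul (M := Submodule.span ℂ (Set.range bchar)) ha hb
    rw [Submodule.span_mul_span] at h
    exact Submodule.span_mono hmulset h
  one_mem' := Submodule.subset_span ⟨0, bchar_zero⟩
  add_mem' := fun ha hb => Submodule.add_mem _ ha hb
  zero_mem' := Submodule.zero_mem _
  algebraMap_mem' := by
    intro r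
    rw [Algebra.algebraMap_eq_smul_one]
    exact Submodule.smul_mem _ r (Submodule.subset_span ⟨0, bchar_zero⟩)
  star_mem' := by
    intro a ha
    induction ha using Submodule.span_induction with
    | mem x hx =>
        obtain ⟨k, rfl⟩ := hx
        rw [star_bchar]
        exact Submodule.subset_span ⟨-k, rfl⟩
    | zero => rw [star_zero]; exact Submodule.zero_mem _
    | add x y hx hy hx' hy' => rw [star_add]; exact Submodule.add_mem _ hx' hy'
    | smul a x hx hx' =>
        rw [star_smul]
        exact Submodule.smul_mem _ _ hx'

lemma bcharAlg_separatesPoints : (bcharAlg.toSubalgebra).SeparatesPoints := by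
  intro x y hxy
  have h : ∃ k : ℝ, (x : ℝ → Circle) k ≠ (y : ℝ → Circle) k := by
    by_contra h
    push_neg at h
    exact hxy (Subtype.ext (funext h))
  obtain ⟨k, hk⟩ := h
  refine ⟨fun z => bchar k z, ⟨bchar k, ?_, rfl⟩, ?_⟩
  · exact Submodule.subset_span ⟨k, rfl⟩
  · simp only [bchar_apply]
    intro h
    exact hk (Subtype.ext h)

lemma dense_bcharAlg : Dense (bcharAlg : Set C(RBar, ℂ)) := by
  have h := ContinuousMap.starSubalgebra_topologicalClosure_eq_top_of_separatesPoints
    bcharAlg bcharAlg_separatesPoints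
  rw [dense_iff_closure_eq, ← StarSubalgebra.topologicalClosure_coe, h]
  rfl

end BohrAux

/-- Ergodicity of the Haar measure on the Bohr compactification of `ℝ` under the
rescaling action of `ℝ \ {0}`: any `ψ ∈ L²(R̄, μ₀)` invariant (a.e.) under every


rescaling `λ*`, `λ ≠ 0`, is a.e. equal to a constant. -/
theorem haar_ergodic_under_scaling
    (μ₀ : Measure RBar) [μ₀.IsHaarMeasure] [IsProbabilityMeasure μ₀]
    (ψ : RBar → ℂ) (hψ : MemLp ψ 2 μ₀)
    (hinv : ∀ l : ℝ, l ≠ 0 → (fun x : RBar => ψ (scaleBohr l x)) =ᵐ[μ₀] ψ) :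
    ∃ c : ℂ, ψ =ᵐ[μ₀] fun _ => c := by
  classical
  let ψL : Lp ℂ 2 μ₀ := hψ.toLp ψ
  let c : ℝ → ℂ := fun k => @inner ℂ _ _ (bcharL μ₀ k) ψL
  have hcoe : ∀ k, c k = ∫ x, conj (bchar k x) * ψ x ∂μ₀ := by
    intro k
    show @inner ℂ _ _ (bcharL μ₀ k) ψL = _
    have hψcoe : (ψL : RBar → ℂ) =ᵐ[μ₀] ψ := MeasureTheory.MemLp.coeFn_toLp hψ
    rw [MeasureTheory.L2.inner_def]
    apply integral_congr_ae
    filter_upwards [bcharL_coeFn μ₀ k, hψcoe] with x h1 h2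
    rw [RCLike.inner_apply, h1, h2, mul_comm]
  have hscale : ∀ (l : ℝ), l ≠ 0 → ∀ k, c k = c (k / l) := by
    intro l hl k
    rw [hcoe, hcoe]
    have h1 : ∫ x, conj (bchar k x) * ψ x ∂μ₀
        = ∫ x, conj (bchar k x) * ψ (scaleBohr l x) ∂μ₀ := by
      apply integral_congr_ae
      filter_upwards [hinv l hl] with x hx
      rw [hx]
    rw [h1]
    have h2 : ∀ x : RBar, conj (bchar k x) * ψ (scaleBohr l x)
        = (fun y => conj (bchar (k / l) y) * ψ y) ((scaleMeasEquiv l hl) x) := by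
      intro x
      have hx : (scaleMeasEquiv l hl) x = scaleBohr l x := rfl
      rw [hx]
      simp only []
      congr 2
      show ((x : ℝ → Circle) k : ℂ) = ((scaleBohr l x : ℝ → Circle) (k / l) : ℂ)
      congr 1
      show (x : ℝ → Circle) k = (x : ℝ → Circle) (l * (k / l))
      rw [mul_comm l (k / l), div_mul_cancel₀ _ hl]
    simp_rw [h2]
    exact (scale_measurePreserving μ₀ hl).integral_comp'
      (fun y => conj (bchar (k / l) y) * ψ y)
  have hconst : ∀ k : ℝ, k ≠ 0 → c k = c 1 := by
    intro k hk
    have := hscale k hk k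
    rwa [div_self hk] at this
  have hone : c 1 = 0 := by
    by_contra hc1
    have hsum : Summable (fun k : ℝ => ‖@inner ℂ _ _ (bcharL μ₀ k) ψL‖ ^ 2) :=
      (orthonormal_bcharL μ₀).inner_products_summable ψL
    have h0 := hsum.tendsto_cofinite_zero
    have heq : (fun k : ℝ => ‖@inner ℂ _ _ (bcharL μ₀ k) ψL‖ ^ 2)
        =ᶠ[Filter.cofinite] fun _ => ‖c 1‖ ^ 2 := by
      have hmem : {(0 : ℝ)}ᶜ ∈ (Filter.cofinite : Filter ℝ) := by
        rw [Filter.mem_cofinite, compl_compl]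
        exact Set.finite_singleton 0
      filter_upwards [hmem] with j hj
      have hj' : c j = c 1 := hconst j hj
      show ‖c j‖ ^ 2 = ‖c 1‖ ^ 2
      rw [hj']
    have h0' : Tendsto (fun _ : ℝ => ‖c 1‖ ^ 2) Filter.cofinite (𝓝 0) :=
      (Filter.tendsto_congr' heq).mp h0
    have h00 : (0 : ℝ) = ‖c 1‖ ^ 2 := tendsto_nhds_unique h0' tendsto_const_nhds
    have : c 1 = 0 := by
      have := h00.symm
      rw [pow_eq_zero_iff (two_ne_zero), norm_eq_zero] at this
      exact this
    exact hc1 this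
  have hzero : ∀ k : ℝ, k ≠ 0 → c k = 0 := fun k hk => (hconst k hk).trans hone
  refine ⟨c 0, ?_⟩
  set φ : Lp ℂ 2 μ₀ := ψL - c 0 • bcharL μ₀ 0 with hφdef
  have hφinner : ∀ k : ℝ, @inner ℂ _ _ (bcharL μ₀ k) φ = 0 := by
    intro k
    rw [hφdef, inner_sub_right, inner_smul_right, inner_bcharL]
    by_cases hk : k = 0
    · subst hk
      rw [if_pos rfl, mul_one]
      exact sub_self _
    · rw [if_neg hk, mul_zero, sub_zero]
      exact hzero k hk
  have hT : ∀ y : Lp ℂ 2 μ₀, @inner ℂ _ _ y φ = 0 := by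
    have hdenseL : Dense ((ContinuousMap.toLp (E := ℂ) 2 μ₀ ℂ) ''
        (bcharAlg : Set C(RBar, ℂ))) :=
      (ContinuousMap.toLp_denseRange (E := ℂ) (𝕜 := ℂ) (μ := μ₀) (p := 2)
        (by norm_num)).dense_image (ContinuousMap.toLp (E := ℂ) 2 μ₀ ℂ).continuous
        dense_bcharAlg
    have hsub : ((ContinuousMap.toLp (E := ℂ) 2 μ₀ ℂ) '' (bcharAlg : Set C(RBar, ℂ)))
        ⊆ {y : Lp ℂ 2 μ₀ | @inner ℂ _ _ y φ = 0} := by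
      rintro _ ⟨a, ha, rfl⟩
      have hmem : a ∈ Submodule.span ℂ (Set.range bchar) := ha
      clear ha
      induction hmem using Submodule.span_induction with
      | mem f hf =>
          obtain ⟨k, rfl⟩ := hf
          exact hφinner k
      | zero => show @inner ℂ _ _ _ _ = 0; rw [map_zero, inner_zero_left]
      | add f g hf hg hf' hg' =>
          show @inner ℂ _ _ _ _ = 0
          rw [map_add, inner_add_left]
          rw [Set.mem_setOf_eq] at hf' hg'
          rw [hf', hg', add_zero]
      | smul r f hf hf' =>
          show @inner ℂ _ _ _ _ = 0
          rw [_root_.map_smul, inner_smul_left]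
          rw [Set.mem_setOf_eq] at hf'
          rw [hf', mul_zero]
    have hclosed : IsClosed {y : Lp ℂ 2 μ₀ | @inner ℂ _ _ y φ = 0} :=
      isClosed_eq (Continuous.inner continuous_id continuous_const) continuous_const
    intro y
    exact hclosed.closure_subset_iff.mpr hsub (hdenseL.closure_eq ▸ Set.mem_univ y :
      y ∈ closure ((ContinuousMap.toLp (E := ℂ) 2 μ₀ ℂ) '' (bcharAlg : Set C(RBar, ℂ))))
  have hφ0 : φ = 0 := inner_self_eq_zero.mp (hT φ)
  have hLp : ψL = c 0 • bcharL μ₀ 0 := sub_eq_zero.mp hφ0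
  have h1 : ψ =ᵐ[μ₀] ψL := (MeasureTheory.MemLp.coeFn_toLp hψ).symm
  have h2 : (ψL : RBar → ℂ) =ᵐ[μ₀] fun _ => c 0 := by
    rw [hLp]
    filter_upwards [Lp.coeFn_smul (c 0) (bcharL μ₀ 0), bcharL_coeFn μ₀ 0] with x ha hb
    rw [ha, Pi.smul_apply, hb, bchar_zero]
    simp
  exact h1.trans h2
end
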